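/- Let q : ℂ × ℂ → ℂ be a continuous function. If there exist functions f, g : ℂ → ℂ such that for all x, y ∈ ℂ one has Complex.exp (q (x, y)) = f x · g y, then for all x, y ∈ ℂ one has q (x, y) + q (0, 0) − q (x, 0) − q (0, y) = 0. -/

import Mathlib

/-- If `exp (q (x, y))` factors as `f x · g y`, then the mixed (cross) part of the
continuous function `q` vanishes. -/
theorem mixed_part_vanishes_of_exp_factorizes (q : ℂ × ℂ → ℂ) (hq : Continuous q)
    (h : ∃ f g : ℂ → ℂ, ∀ x y : ℂ, Complex.exp (q (x, y)) = f x * g y) :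
    ∀ x y : ℂ, q (x, y) + q (0, 0) - q (x, 0) - q (0, y) = 0 := by
  obtain ⟨f, g, hfg⟩ := h
  set H : ℂ × ℂ → ℂ := fun p => q p + q (0, 0) - q (p.1, 0) - q (0, p.2) with hH
  have hHc : Continuous H := by
    apply Continuous.sub
    apply Continuous.sub
    · exact (hq.add continuous_const)
    · exact hq.comp (continuous_fst.prodMk continuous_const)
    · exact hq.comp (continuous_const.prodMk continuous_snd)
  -- exp (H p) = 1 for all p
  have hexp : ∀ p : ℂ × ℂ, Complex.exp (H p) = 1 := by
    intro ⟨x, y⟩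
    have key : Complex.exp (q (x, y)) * Complex.exp (q (0, 0)) =
        Complex.exp (q (x, 0)) * Complex.exp (q (0, y)) := by
      rw [hfg x y, hfg 0 0, hfg x 0, hfg 0 y]; ring
    have h1 : Complex.exp (q (x, 0)) ≠ 0 := Complex.exp_ne_zero _
    have h2 : Complex.exp (q (0, y)) ≠ 0 := Complex.exp_ne_zero _
    have step : Complex.exp (H (x, y)) * (Complex.exp (q (x, 0)) * Complex.exp (q (0, y)))
        = 1 * (Complex.exp (q (x, 0)) * Complex.exp (q (0, y))) := by
      simp only [hH]
      rw [one_mul, ← Complex.exp_add, ← Complex.exp_add,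
        show q (x, y) + q (0, 0) - q (x, 0) - q (0, y) + (q (x, 0) + q (0, y))
          = q (x, y) + q (0, 0) from by ring, Complex.exp_add, key, ← Complex.exp_add]
    exact mul_right_cancel₀ (mul_ne_zero h1 h2) step
  -- values of H are 0 or have norm ≥ 1
  have hdich : ∀ p : ℂ × ℂ, H p = 0 ∨ (1 : ℝ) ≤ ‖H p‖ := by
    intro p
    obtain ⟨n, hn⟩ := Complex.exp_eq_one_iff.mp (hexp p)
    rcases eq_or_ne n 0 with h0 | h0
    · left; simp [hn, h0]
    · right
      rw [hn]
      have h1 : (1 : ℝ) ≤ |(n : ℝ)| := by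
        rw [← Int.cast_abs]
        exact_mod_cast Int.one_le_abs h0
      have h2 : ‖(n : ℂ) * (2 * Real.pi * Complex.I)‖ = |(n : ℝ)| * (2 * Real.pi) := by
        simp [norm_mul, Complex.norm_I, Complex.norm_real,
          abs_of_nonneg Real.pi_pos.le, Complex.norm_intCast]
      rw [h2]
      nlinarith [Real.pi_gt_three, abs_nonneg ((n : ℝ))]
  -- the set where H = 0 is clopen
  have hset : H ⁻¹' {0} = H ⁻¹' (Metric.ball 0 1) := by
    ext p
    simp only [Set.mem_preimage, Set.mem_singleton_iff, Metric.mem_ball, dist_zero_right]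
    constructor
    · intro h; rw [h]; simp
    · intro h
      rcases hdich p with h0 | h1
      · exact h0
      · linarith
  have hclopen : IsClopen (H ⁻¹' {0}) := by
    constructor
    · exact IsClosed.preimage hHc isClosed_singleton
    · rw [hset]; exact IsOpen.preimage hHc Metric.isOpen_ball
  have hne : ((0 : ℂ), (0 : ℂ)) ∈ H ⁻¹' {0} := by
    simp [hH]
  have := hclopen.eq_univ ⟨_, hne⟩
  intro x y
  have : ((x, y) : ℂ × ℂ) ∈ H ⁻¹' {0} := this ▸ Set.mem_univ _
  simpa [hH] using this
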